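/- A node multiway cut M ⊆ V \ T of (G,T) with T = {t₁,…,t_k} is minimal if and only if there exist k connected components C₁,…,C_k of G − M such that (1) t_i ∈ C_i for each i, and (2) for every v ∈ M there exist indices i < j with N(v) ∩ C_i ≠ ∅ and N(v) ∩ C_j ≠ ∅. -/

import Mathlib

open SimpleGraph Set

variable {V : Type*}

lemma walk_to_induced (G : SimpleGraph V) (S : Set V) :
    ∀ {x y : V} (W : G.Walk x y) (hW : ∀ z ∈ W.support, z ∈ S),
      (G.induce S).Reachable ⟨x, hW x W.start_mem_support⟩ ⟨y, hW y W.end_mem_support⟩ := by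
  intro x y W
  induction W with
  | nil => intro h; exact Reachable.refl _
  | cons hadj W' ih =>
    intro h
    refine Reachable.trans (Adj.reachable ?_) (ih fun z hz => h z (by simp [hz]))
    exact hadj

lemma induced_to_walk (G : SimpleGraph V) (S : Set V) {x y : V} (hx : x ∈ S) (hy : y ∈ S)
    (h : (G.induce S).Reachable ⟨x, hx⟩ ⟨y, hy⟩) :
    ∃ W : G.Walk x y, ∀ z ∈ W.support, z ∈ S := by
  obtain ⟨W⟩ := h
  refine ⟨W.map ⟨Subtype.val, fun h => h⟩, ?_⟩
  intro z hz
  rw [Walk.support_map, List.mem_map] at hz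
  obtain ⟨⟨a, ha⟩, -, rfl⟩ := hz
  exact ha

lemma walk_split (G : SimpleGraph V) (S : Set V) (v : V) :
    ∀ {x y : V} (W : G.Walk x y), x ≠ v → (∀ z ∈ W.support, z ∈ S ∪ {v}) →
      (∀ z ∈ W.support, z ∈ S) ∨
      ∃ a, G.Adj a v ∧ ∃ W' : G.Walk x a, ∀ z ∈ W'.support, z ∈ S := by
  intro x y W
  induction W with
  | nil =>
    intro hx h
    left; intro w hw
    rcases h w hw with h' | h'
    · exact h'
    · simp only [Set.mem_singleton_iff] at h'
      simp only [Walk.support_nil, List.mem_singleton] at hw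
      subst hw
      exact absurd h' hx
  | @cons x z y hadj W' ih =>
    intro hx h
    have hxS : x ∈ S := by
      rcases h x (by simp) with h' | h'
      · exact h'
      · exact absurd h' hx
    by_cases hz : z = v
    · subst hz
      exact Or.inr ⟨x, hadj, Walk.nil, by simp [hxS]⟩
    · rcases ih hz (fun w hw => h w (by simp [hw])) with h' | ⟨a, ha, W'', hW''⟩
      · left; intro w hw
        rcases List.mem_cons.mp (by simpa [Walk.support_cons] using hw) with rfl | hw'
        · exact hxS
        · exact h' w hw'
      · refine Or.inr ⟨a, ha, Walk.cons hadj W'', ?_⟩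
        intro w hw
        rcases List.mem_cons.mp (by simpa [Walk.support_cons] using hw) with rfl | hw'
        · exact hxS
        · exact hW'' w hw'

/-- `s` and `t` are separated in `G - M` (the graph obtained by deleting the vertices of `M`). -/
def SepSets (G : SimpleGraph V) (M : Set V) (s t : V) : Prop :=
  ∀ (hs : s ∈ (Mᶜ : Set V)) (ht : t ∈ (Mᶜ : Set V)),
    ¬ (G.induce (Mᶜ : Set V)).Reachable ⟨s, hs⟩ ⟨t, ht⟩

/-- `M` is a node multiway cut of `(G, T)`: a set of non-terminal vertices whose removal
disconnects every pair of distinct terminals. -/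
def IsNodeMultiwayCut (G : SimpleGraph V) (T : Set V) (M : Set V) : Prop :=
  M ⊆ Tᶜ ∧ ∀ s ∈ T, ∀ u ∈ T, s ≠ u → SepSets G M s u

/-- `M` is a minimal node multiway cut of `(G, T)`. -/
def IsMinNodeMultiwayCut (G : SimpleGraph V) (T : Set V) (M : Set V) : Prop :=
  IsNodeMultiwayCut G T M ∧ ∀ M' ⊂ M, ¬ IsNodeMultiwayCut G T M'

/-- `C` is (the vertex set of) a connected component of `G - M`. -/
def IsCompOf (G : SimpleGraph V) (M : Set V) (C : Set V) : Prop :=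
  ∃ c : (G.induce (Mᶜ : Set V)).ConnectedComponent, C = Subtype.val '' c.supp

/-- A node multiway cut `M` of `(G, T)`, `T = {t₁, …, t_k}`, is minimal if
and only if there are `k` connected components `C₁, …, C_k` of `G - M` such that
(1) `t_i ∈ C_i` for each `i`, and (2) every `v ∈ M` has neighbors in `C_i` and `C_j` for
some pair of indices `i < j`. -/
theorem minimal_node_multiway_cut_iff (G : SimpleGraph V) (k : ℕ) (t : Fin k → V)
    (ht : Function.Injective t) (M : Set V)
    (hM : IsNodeMultiwayCut G (Set.range t) M) :
    IsMinNodeMultiwayCut G (Set.range t) M ↔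
      ∃ C : Fin k → Set V,
        (∀ i, IsCompOf G M (C i) ∧ t i ∈ C i) ∧
        (∀ v ∈ M, ∃ i j : Fin k, i < j ∧
          (∃ u ∈ C i, G.Adj v u) ∧ (∃ u ∈ C j, G.Adj v u)) := by
  have hTM : ∀ i, t i ∈ (Mᶜ : Set V) := fun i h => hM.1 h (Set.mem_range_self i)
  constructor
  · rintro ⟨-, hmin⟩
    classical
    set C : Fin k → Set V := fun i =>
      Subtype.val '' ((G.induce (Mᶜ : Set V)).connectedComponentMk ⟨t i, hTM i⟩).supp with hCdef
    have hmemC : ∀ (i : Fin k) (a : V), a ∈ C i ↔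
        ∃ ha : a ∈ (Mᶜ : Set V),
          (G.induce (Mᶜ : Set V)).Reachable ⟨a, ha⟩ ⟨t i, hTM i⟩ := by
      intro i a
      constructor
      · rintro ⟨⟨a', ha'⟩, hsupp, rfl⟩
        exact ⟨ha', ConnectedComponent.eq.mp (ConnectedComponent.mem_supp_iff _ _ |>.mp hsupp)⟩
      · rintro ⟨ha, hr⟩
        exact ⟨⟨a, ha⟩, ConnectedComponent.mem_supp_iff _ _ |>.mpr (ConnectedComponent.eq.mpr hr), rfl⟩
    refine ⟨C, fun i => ⟨⟨_, rfl⟩, (hmemC i (t i)).mpr ⟨hTM i, Reachable.refl _⟩⟩, ?_⟩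
    intro v hv
    have hsub : M \ {v} ⊂ M :=
      ⟨Set.diff_subset, fun h => (h hv).2 rfl⟩
    have hnot := hmin _ hsub
    rw [IsNodeMultiwayCut] at hnot
    push_neg at hnot
    have hsubT : M \ {v} ⊆ (Set.range t)ᶜ := fun x hx => hM.1 hx.1
    obtain ⟨s, hs, u, hu, hsu, hnsep⟩ := hnot hsubT
    rw [SepSets] at hnsep
    push_neg at hnsep
    obtain ⟨hs', hu', hreach⟩ := hnsep
    obtain ⟨W, hW⟩ := induced_to_walk G _ hs' hu' hreach
    have hcompl : ((M \ {v})ᶜ : Set V) = Mᶜ ∪ {v} := by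
      ext x; simp [Set.mem_diff, or_comm, not_and_or]
      tauto
    rw [hcompl] at hW
    obtain ⟨i, rfl⟩ := hs
    obtain ⟨j, rfl⟩ := hu
    have hiv : t i ≠ v := fun h => (hTM i) (h ▸ hv)
    have hjv : t j ≠ v := fun h => (hTM j) (h ▸ hv)
    -- split from the s side
    have hsplit1 := walk_split G (Mᶜ : Set V) v W hiv hW
    rcases hsplit1 with hall | ⟨a, hav, Wa, hWa⟩
    · exact absurd (walk_to_induced G _ W hall) (hM.2 _ (Set.mem_range_self i) _ (Set.mem_range_self j) hsu _ _)
    have hsplit2 := walk_split G (Mᶜ : Set V) v W.reverse hjv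
      (fun z hz => hW z (by rwa [Walk.support_reverse, List.mem_reverse] at hz))
    rcases hsplit2 with hall | ⟨b, hbv, Wb, hWb⟩
    · have hall' : ∀ z ∈ W.support, z ∈ (Mᶜ : Set V) := fun z hz =>
        hall z (by rwa [Walk.support_reverse, List.mem_reverse])
      exact absurd (walk_to_induced G _ W hall') (hM.2 _ (Set.mem_range_self i) _ (Set.mem_range_self j) hsu _ _)
    have haCi : a ∈ C i := by
      refine (hmemC i a).mpr ⟨hWa a Wa.end_mem_support, ?_⟩
      exact (walk_to_induced G _ Wa hWa).symm
    have hbCj : b ∈ C j := by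
      refine (hmemC j b).mpr ⟨hWb b Wb.end_mem_support, ?_⟩
      exact (walk_to_induced G _ Wb hWb).symm
    have hij : i ≠ j := fun h => hsu (h ▸ rfl)
    rcases lt_or_gt_of_ne hij with h | h
    · exact ⟨i, j, h, ⟨a, haCi, hav.symm⟩, ⟨b, hbCj, hbv.symm⟩⟩
    · exact ⟨j, i, h, ⟨b, hbCj, hbv.symm⟩, ⟨a, haCi, hav.symm⟩⟩
  · rintro ⟨C, hC1, hC2⟩
    refine ⟨hM, ?_⟩
    rintro M' hM'sub ⟨hM'T, hsep⟩
    obtain ⟨v, hvM, hvM'⟩ := Set.exists_of_ssubset hM'sub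
    obtain ⟨i, j, hij, ⟨a, haC, hva⟩, ⟨b, hbC, hvb⟩⟩ := hC2 v hvM
    obtain ⟨ci, hci⟩ := (hC1 i).1
    obtain ⟨cj, hcj⟩ := (hC1 j).1
    have htiC := (hC1 i).2
    have htjC := (hC1 j).2
    -- get reachability from t i to a in G - M
    have hreach_ia : ∃ (h1 : t i ∈ (Mᶜ : Set V)) (h2 : a ∈ (Mᶜ : Set V)),
        (G.induce (Mᶜ : Set V)).Reachable ⟨t i, h1⟩ ⟨a, h2⟩ := by
      rw [hci] at htiC haC
      obtain ⟨⟨x, hx⟩, hxsupp, hxval⟩ := htiC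
      obtain ⟨⟨y, hy⟩, hysupp, hyval⟩ := haC
      subst hxval; subst hyval
      refine ⟨hx, hy, ?_⟩
      have := (ConnectedComponent.mem_supp_iff _ _).mp hxsupp
      have h2 := (ConnectedComponent.mem_supp_iff _ _).mp hysupp
      exact ConnectedComponent.eq.mp (this.trans h2.symm)
    have hreach_jb : ∃ (h1 : t j ∈ (Mᶜ : Set V)) (h2 : b ∈ (Mᶜ : Set V)),
        (G.induce (Mᶜ : Set V)).Reachable ⟨t j, h1⟩ ⟨b, h2⟩ := by
      rw [hcj] at htjC hbC
      obtain ⟨⟨x, hx⟩, hxsupp, hxval⟩ := htjC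
      obtain ⟨⟨y, hy⟩, hysupp, hyval⟩ := hbC
      subst hxval; subst hyval
      refine ⟨hx, hy, ?_⟩
      have := (ConnectedComponent.mem_supp_iff _ _).mp hxsupp
      have h2 := (ConnectedComponent.mem_supp_iff _ _).mp hysupp
      exact ConnectedComponent.eq.mp (this.trans h2.symm)
    obtain ⟨h1, h2, hr1⟩ := hreach_ia
    obtain ⟨h3, h4, hr2⟩ := hreach_jb
    obtain ⟨Wa, hWa⟩ := induced_to_walk G _ h1 h2 hr1
    obtain ⟨Wb, hWb⟩ := induced_to_walk G _ h3 h4 hr2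
    have hMM' : M' ⊆ M := hM'sub.1
    -- build walk t i → a → v → b → t j in G - M'
    set W : G.Walk (t i) (t j) :=
      Wa.append (Walk.cons hva.symm (Walk.cons hvb Wb.reverse)) with hWdef
    have hsupp : ∀ z ∈ W.support, z ∈ (M'ᶜ : Set V) := by
      intro z hz
      rw [hWdef, Walk.mem_support_append_iff] at hz
      rcases hz with hz | hz
      · exact fun h => hWa z hz (hMM' h)
      · rw [Walk.support_cons, List.mem_cons] at hz
        rcases hz with rfl | hz
        · exact fun h => h2 (hMM' h)
        · rw [Walk.support_cons, List.mem_cons] at hz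
          rcases hz with rfl | hz
          · exact hvM'
          · rw [Walk.support_reverse, List.mem_reverse] at hz
            exact fun h => hWb z hz (hMM' h)
    have := walk_to_induced G _ W hsupp
    exact hsep _ (Set.mem_range_self i) _ (Set.mem_range_self j)
      (fun h => hij.ne (ht h)) _ _ this
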